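/- For a strictly decreasing partition λ = (λ_1 > λ_2 > ... > λ_ℓ > 0), the number of standard shifted tableaux of shape λ equals |λ|! · ∏_{i=1}^{ℓ} 1/λ_i! · ∏_{1 ≤ i < j ≤ ℓ} (λ_i - λ_j)/(λ_i + λ_j), where |λ| = λ_1 + ... + λ_ℓ. -/

import Mathlib

open Finset

/-- The shifted diagram of shape `lam` with `l` rows: row `i` (0-indexed) has
`lam i` boxes in columns `i, i+1, ..., i + lam i - 1` (each row is shifted one
step to the right with respect to the previous one). -/
def shiftedCells (l : ℕ) (lam : ℕ → ℕ) : Finset (ℕ × ℕ) :=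
  (Finset.range l ×ˢ Finset.range (l + (Finset.range l).sup lam)).filter
    (fun p => p.1 ≤ p.2 ∧ p.2 < p.1 + lam p.1)

/-- A standard shifted tableau of shape `lam` (with `l` rows): a bijective filling
of the shifted diagram by `1, ..., |lam|` (here modeled by `Fin |lam|`) with
entries strictly increasing from left to right along each row and strictly
increasing down each column. -/
def IsSST (l : ℕ) (lam : ℕ → ℕ)
    (T : ↥(shiftedCells l lam) → Fin (∑ i ∈ Finset.range l, lam i)) : Prop :=
  Function.Bijective T ∧
  (∀ c c' : ↥(shiftedCells l lam),
    (c : ℕ × ℕ).1 = (c' : ℕ × ℕ).1 → (c : ℕ × ℕ).2 < (c' : ℕ × ℕ).2 → T c < T c') ∧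
  (∀ c c' : ↥(shiftedCells l lam),
    (c : ℕ × ℕ).2 = (c' : ℕ × ℕ).2 → (c : ℕ × ℕ).1 < (c' : ℕ × ℕ).1 → T c < T c')

/-- The number of standard shifted tableaux of shape `lam` with `l` rows. -/
noncomputable def stdShiftedTableauCount (l : ℕ) (lam : ℕ → ℕ) : ℕ :=
  Nat.card {T : ↥(shiftedCells l lam) → Fin (∑ i ∈ Finset.range l, lam i) // IsSST l lam T}


open Finset

lemma mem_shiftedCells {l : ℕ} {lam : ℕ → ℕ} {p : ℕ × ℕ} :
    p ∈ shiftedCells l lam ↔ p.1 < l ∧ p.1 ≤ p.2 ∧ p.2 < p.1 + lam p.1 := by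
  simp only [shiftedCells, mem_filter, mem_product, mem_range]
  constructor
  · rintro ⟨⟨h1, _⟩, h3, h4⟩; exact ⟨h1, h3, h4⟩
  · rintro ⟨h1, h3, h4⟩
    refine ⟨⟨h1, ?_⟩, h3, h4⟩
    have : lam p.1 ≤ (Finset.range l).sup lam := Finset.le_sup (mem_range.mpr h1)
    omega

lemma shiftedCells_congr {l : ℕ} {lam mu : ℕ → ℕ} (h : ∀ i < l, lam i = mu i) :
    shiftedCells l lam = shiftedCells l mu := by
  ext p
  simp only [mem_shiftedCells]
  constructor
  · rintro ⟨h1, h2, h3⟩; exact ⟨h1, h2, by rw [← h _ h1]; exact h3⟩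
  · rintro ⟨h1, h2, h3⟩; exact ⟨h1, h2, by rw [h _ h1]; exact h3⟩

lemma shiftedCells_zero_last {l : ℕ} {lam : ℕ → ℕ} (hl : 0 < l) (h : lam (l - 1) = 0) :
    shiftedCells l lam = shiftedCells (l - 1) lam := by
  ext p
  simp only [mem_shiftedCells]
  constructor
  · rintro ⟨h1, h2, h3⟩
    refine ⟨?_, h2, h3⟩
    rcases Nat.lt_or_ge p.1 (l - 1) with hc | hc
    · exact hc
    · exfalso; have : p.1 = l - 1 := by omega
      rw [this, h] at h3; omega
  · rintro ⟨h1, h2, h3⟩; exact ⟨by omega, h2, h3⟩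

lemma card_shiftedCells (l : ℕ) (lam : ℕ → ℕ) :
    (shiftedCells l lam).card = ∑ i ∈ Finset.range l, lam i := by
  have : shiftedCells l lam
      = (Finset.range l).biUnion (fun i => (Finset.Ico i (i + lam i)).map
          ⟨fun j => (i, j), fun a b hab => by simpa using hab⟩) := by
    ext p
    simp only [mem_shiftedCells, mem_biUnion, mem_range, Finset.mem_map,
      Function.Embedding.coeFn_mk, Finset.mem_Ico]
    constructor
    · rintro ⟨h1, h2, h3⟩
      exact ⟨p.1, h1, p.2, ⟨h2, h3⟩, rfl⟩
    · rintro ⟨i, hi, j, ⟨hj1, hj2⟩, rfl⟩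
      exact ⟨hi, hj1, hj2⟩
  rw [this, Finset.card_biUnion]
  · refine Finset.sum_congr rfl fun i _ => ?_
    rw [Finset.card_map, Nat.card_Ico]; omega
  · intro i _ j _ hij
    simp only [Finset.disjoint_left]
    rintro p hp hq
    simp only [Finset.mem_map, Function.Embedding.coeFn_mk] at hp hq
    obtain ⟨a, _, rfl⟩ := hp
    obtain ⟨b, _, h⟩ := hq
    exact hij (Prod.ext_iff.mp h).1.symm


section transfer
variable {l₁ l₂ : ℕ} {lam₁ lam₂ : ℕ → ℕ}

lemma count_transfer_le
    (hc : shiftedCells l₁ lam₁ = shiftedCells l₂ lam₂)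
    (hn : ∑ i ∈ Finset.range l₁, lam₁ i = ∑ i ∈ Finset.range l₂, lam₂ i) :
    stdShiftedTableauCount l₁ lam₁ ≤ stdShiftedTableauCount l₂ lam₂ := by
  classical
  let Φ : (↥(shiftedCells l₁ lam₁) → Fin (∑ i ∈ Finset.range l₁, lam₁ i)) →
      (↥(shiftedCells l₂ lam₂) → Fin (∑ i ∈ Finset.range l₂, lam₂ i)) :=
    fun T c => ⟨(T ⟨c.1, by rw [hc]; exact c.2⟩).1, by rw [← hn]; exact (T _).2⟩
  have hΦ : ∀ T, IsSST l₁ lam₁ T → IsSST l₂ lam₂ (Φ T) := by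
    rintro T ⟨⟨hinj, hsurj⟩, hrow, hcol⟩
    refine ⟨⟨?_, ?_⟩, ?_, ?_⟩
    · intro c c' h
      have hv := congrArg Fin.val h
      have h2 : (⟨c.1, by rw [hc]; exact c.2⟩ : ↥(shiftedCells l₁ lam₁))
          = ⟨c'.1, by rw [hc]; exact c'.2⟩ := by
        apply hinj
        apply Fin.ext
        exact hv
      have h3 := congrArg Subtype.val h2
      apply Subtype.ext
      exact h3
    · intro k
      obtain ⟨a, ha⟩ := hsurj ⟨k.1, by rw [hn]; exact k.2⟩
      refine ⟨⟨a.1, by rw [← hc]; exact a.2⟩, ?_⟩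
      have hv := congrArg Fin.val ha
      apply Fin.ext
      exact hv
    · intro c c' h1 h2
      exact hrow ⟨c.1, by rw [hc]; exact c.2⟩ ⟨c'.1, by rw [hc]; exact c'.2⟩ h1 h2
    · intro c c' h1 h2
      exact hcol ⟨c.1, by rw [hc]; exact c.2⟩ ⟨c'.1, by rw [hc]; exact c'.2⟩ h1 h2
  have hinjΦ : Function.Injective
      (fun T : {T // IsSST l₁ lam₁ T} => (⟨Φ T.1, hΦ T.1 T.2⟩ : {T // IsSST l₂ lam₂ T})) := by
    rintro ⟨T, hT⟩ ⟨S, hS⟩ h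
    simp only [Subtype.mk.injEq] at h
    apply Subtype.ext
    funext c
    have := congrFun h ⟨c.1, by rw [← hc]; exact c.2⟩
    have hval : (T c).1 = (S c).1 := by
      have h1 := congrArg Fin.val this
      simpa using h1
    exact Fin.ext hval
  exact Nat.card_le_card_of_injective _ hinjΦ

lemma count_transfer
    (hc : shiftedCells l₁ lam₁ = shiftedCells l₂ lam₂)
    (hn : ∑ i ∈ Finset.range l₁, lam₁ i = ∑ i ∈ Finset.range l₂, lam₂ i) :
    stdShiftedTableauCount l₁ lam₁ = stdShiftedTableauCount l₂ lam₂ :=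
  le_antisymm (count_transfer_le hc hn) (count_transfer_le hc.symm hn.symm)

end transfer

lemma count_zero_rows (lam : ℕ → ℕ) : stdShiftedTableauCount 0 lam = 1 := by
  have hc : ∀ p : ℕ × ℕ, p ∉ shiftedCells 0 lam := by simp [shiftedCells]
  have hn : (∑ i ∈ Finset.range 0, lam i) = 0 := by simp
  have hall : ∀ T : ↥(shiftedCells 0 lam) → Fin (∑ i ∈ Finset.range 0, lam i), IsSST 0 lam T := by
    intro T
    refine ⟨⟨fun a => (hc _ a.2).elim, fun k => absurd k.2 (by omega)⟩,
      fun c => (hc _ c.2).elim, fun c => (hc _ c.2).elim⟩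
  rw [stdShiftedTableauCount]
  have : Unique {T : ↥(shiftedCells 0 lam) → Fin (∑ i ∈ Finset.range 0, lam i) // IsSST 0 lam T} := by
    refine ⟨⟨⟨fun c => (hc _ c.2).elim, hall _⟩⟩, ?_⟩
    rintro ⟨T, _⟩
    apply Subtype.ext
    funext c
    exact (hc _ c.2).elim
  exact Nat.card_unique

section Rec
open Finset
variable {l : ℕ} {lam : ℕ → ℕ}

lemma sum_range_update {r : ℕ} (hr : r < l) (h1 : 1 ≤ lam r) :
    ∑ i ∈ Finset.range l, Function.update lam r (lam r - 1) i
      = (∑ i ∈ Finset.range l, lam i) - 1 := by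
  classical
  rw [Finset.sum_update_of_mem (Finset.mem_range.mpr hr)]
  have h2 := Finset.sum_sdiff (f := lam)
    (Finset.singleton_subset_iff.mpr (Finset.mem_range.mpr hr))
  rw [Finset.sum_singleton] at h2
  omega

lemma cells_update {r : ℕ} (hr : r < l) (h1 : 1 ≤ lam r) :
    shiftedCells l (Function.update lam r (lam r - 1))
      = (shiftedCells l lam).erase (r, r + lam r - 1) := by
  classical
  ext ⟨a, b⟩
  rcases eq_or_ne a r with h | h
  · subst h
    simp only [mem_shiftedCells, Finset.mem_erase, Ne, Prod.mk.injEq, not_and,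
      Function.update_self]
    constructor
    · rintro ⟨ha, hb, hc⟩
      exact ⟨fun _ => by omega, ha, hb, by omega⟩
    · rintro ⟨hne, ha, hb, hc⟩
      have h3 : ¬ b = a + lam a - 1 := hne trivial
      exact ⟨ha, hb, by omega⟩
  · simp only [mem_shiftedCells, Finset.mem_erase, Ne, Prod.mk.injEq, not_and,
      Function.update_of_ne h]
    constructor
    · rintro ⟨ha, hb, hc⟩
      exact ⟨fun haa => absurd haa h, ha, hb, hc⟩
    · rintro ⟨_, ha, hb, hc⟩; exact ⟨ha, hb, hc⟩

lemma row_end_mono (hdec : ∀ i j, i < j → j < l → lam j < lam i) :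
    ∀ i < l, ∀ k ≤ i, lam i + i ≤ lam k + k := by
  intro i
  induction i with
  | zero =>
    intro _ k hk
    have : k = 0 := by omega
    subst this; omega
  | succ m ih =>
    intro h1 k hk
    rcases eq_or_ne k (m + 1) with h | h
    · subst h; omega
    · have h2 : lam (m + 1) < lam m := hdec m (m + 1) (by omega) h1
      have h3 := ih (by omega) k (by omega)
      omega

lemma cornerCell_mem {r : ℕ} (hr : r < l) (h1 : 1 ≤ lam r) :
    (r, r + lam r - 1) ∈ shiftedCells l lam := by
  refine mem_shiftedCells.mpr ⟨hr, ?_, ?_⟩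
  · show r ≤ r + lam r - 1; omega
  · show r + lam r - 1 < r + lam r; omega

lemma count_rec (hl : 0 < l)
    (hpos : ∀ i < l, 0 < lam i)
    (hdec : ∀ i j, i < j → j < l → lam j < lam i) :
    stdShiftedTableauCount l lam
      = ∑ r ∈ (Finset.range l).filter (fun r => r + 1 = l ∨ lam (r + 1) + 1 < lam r),
          stdShiftedTableauCount l (Function.update lam r (lam r - 1)) := by
  classical
  set n := ∑ i ∈ Finset.range l, lam i with hn
  have hn1 : 1 ≤ n := by
    have h0 : lam 0 ≤ n := Finset.single_le_sum (f := lam) (fun i _ => Nat.zero_le _)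
      (Finset.mem_range.mpr hl)
    have := hpos 0 hl
    omega
  set C := (Finset.range l).filter (fun r => r + 1 = l ∨ lam (r + 1) + 1 < lam r) with hC
  have hsum : ∀ r < l, (∑ i ∈ Finset.range l, Function.update lam r (lam r - 1) i) = n - 1 :=
    fun r hrl => sum_range_update hrl (hpos r hrl)
  let φ : ↥C → Type := fun r =>
    {T' : ↥(shiftedCells l (Function.update lam r.1 (lam r.1 - 1)))
        → Fin (∑ i ∈ Finset.range l, Function.update lam r.1 (lam r.1 - 1) i) //
      IsSST l (Function.update lam r.1 (lam r.1 - 1)) T'}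
  have hrC : ∀ r : ↥C, r.1 < l :=
    fun r => Finset.mem_range.mp (Finset.mem_filter.mp r.2).1
  have hrC' : ∀ r : ↥C, r.1 + 1 = l ∨ lam (r.1 + 1) + 1 < lam r.1 :=
    fun r => (Finset.mem_filter.mp r.2).2
  have memcell : ∀ (r : ↥C) (c : ↥(shiftedCells l (Function.update lam r.1 (lam r.1 - 1)))),
      c.1 ∈ shiftedCells l lam ∧ c.1 ≠ (r.1, r.1 + lam r.1 - 1) := by
    rintro r ⟨p, hp⟩
    rw [cells_update (hrC r) (hpos _ (hrC r)), Finset.mem_erase] at hp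
    exact ⟨hp.2, hp.1⟩
  have emb : ∀ (r : ↥C) (p : ℕ × ℕ), p ∈ shiftedCells l lam → p ≠ (r.1, r.1 + lam r.1 - 1) →
      p ∈ shiftedCells l (Function.update lam r.1 (lam r.1 - 1)) := by
    intro r p hp hne
    rw [cells_update (hrC r) (hpos _ (hrC r))]
    exact Finset.mem_erase.mpr ⟨hne, hp⟩
  have hvlt : ∀ (r : ↥C)
      (k : Fin (∑ i ∈ Finset.range l, Function.update lam r.1 (lam r.1 - 1) i)),
      (k : ℕ) < n - 1 := by
    intro r k
    have h1 := k.2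
    have heq := hsum r.1 (hrC r)
    omega
  -- the raw backward map
  let Graw : ∀ r : ↥C,
      (↥(shiftedCells l (Function.update lam r.1 (lam r.1 - 1)))
        → Fin (∑ i ∈ Finset.range l, Function.update lam r.1 (lam r.1 - 1) i)) →
      (↥(shiftedCells l lam) → Fin n) := fun r T' c =>
    if h : c.1 = (r.1, r.1 + lam r.1 - 1) then ⟨n - 1, by omega⟩
    else ⟨(T' ⟨c.1, emb r c.1 c.2 h⟩).1, by have := hvlt r (T' ⟨c.1, emb r c.1 c.2 h⟩); omega⟩
  -- values of Graw
  have Graw_corner : ∀ (r : ↥C) T' (c : ↥(shiftedCells l lam))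
      (h : c.1 = (r.1, r.1 + lam r.1 - 1)),
      (Graw r T' c : Fin n).1 = n - 1 := by
    intro r T' c h
    show (dite _ _ _ : Fin n).1 = _
    rw [dif_pos h]
  have Graw_other : ∀ (r : ↥C) T' (c : ↥(shiftedCells l lam))
      (h : c.1 ≠ (r.1, r.1 + lam r.1 - 1)),
      (Graw r T' c : Fin n).1 = (T' ⟨c.1, emb r c.1 c.2 h⟩).1 := by
    intro r T' c h
    show (dite _ _ _ : Fin n).1 = _
    rw [dif_neg h]
  have memmk : ∀ a b : ℕ, a < l → a ≤ b → b < a + lam a → (a, b) ∈ shiftedCells l lam :=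
    fun a b h1 h2 h3 => mem_shiftedCells.mpr ⟨h1, h2, h3⟩
  -- Graw preserves SST-ness
  have hG : ∀ (r : ↥C) T', IsSST l (Function.update lam r.1 (lam r.1 - 1)) T' →
      IsSST l lam (Graw r T') := by
    rintro r T' ⟨⟨hinj, hsurj⟩, hrow, hcol⟩
    refine ⟨⟨?_, ?_⟩, ?_, ?_⟩
    · -- injective
      intro c c' h
      have hv := congrArg Fin.val h
      by_cases h1 : c.1 = (r.1, r.1 + lam r.1 - 1) <;>
        by_cases h2 : c'.1 = (r.1, r.1 + lam r.1 - 1)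
      · exact Subtype.ext (h1.trans h2.symm)
      · exfalso
        rw [Graw_corner r T' c h1, Graw_other r T' c' h2] at hv
        have := hvlt r (T' ⟨c'.1, emb r c'.1 c'.2 h2⟩)
        omega
      · exfalso
        rw [Graw_corner r T' c' h2, Graw_other r T' c h1] at hv
        have := hvlt r (T' ⟨c.1, emb r c.1 c.2 h1⟩)
        omega
      · rw [Graw_other r T' c h1, Graw_other r T' c' h2] at hv
        have h3 := hinj (Fin.ext hv)
        have h4 := congrArg Subtype.val h3
        exact Subtype.ext h4
    · -- surjective
      intro k
      by_cases hk : (k : ℕ) = n - 1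
      · refine ⟨⟨(r.1, r.1 + lam r.1 - 1), cornerCell_mem (hrC r) (hpos _ (hrC r))⟩, ?_⟩
        apply Fin.ext
        rw [Graw_corner r T' _ rfl]
        omega
      · have hk' : (k : ℕ) < n - 1 := by have := k.2; omega
        obtain ⟨x, hx⟩ := hsurj ⟨(k : ℕ), by have := hsum r.1 (hrC r); omega⟩
        have hxne : (⟨x.1, (memcell r x).1⟩ : ↥(shiftedCells l lam)).1
            ≠ (r.1, r.1 + lam r.1 - 1) := (memcell r x).2
        refine ⟨⟨x.1, (memcell r x).1⟩, ?_⟩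
        apply Fin.ext
        rw [Graw_other r T' _ hxne]
        have hv := congrArg Fin.val hx
        exact hv
    · -- rows
      intro c c' heq hlt
      by_cases h2 : c'.1 = (r.1, r.1 + lam r.1 - 1)
      · have h1 : c.1 ≠ (r.1, r.1 + lam r.1 - 1) := by
          intro hcE
          have e1 := congrArg Prod.snd hcE
          have e2 := congrArg Prod.snd h2
          simp only at e1 e2
          omega
        rw [Fin.lt_def, Graw_corner r T' c' h2, Graw_other r T' c h1]
        exact hvlt r _
      · by_cases h1 : c.1 = (r.1, r.1 + lam r.1 - 1)
        · exfalso
          have hm := mem_shiftedCells.mp c'.2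
          have e1 := congrArg Prod.fst h1
          have e2 := congrArg Prod.snd h1
          simp only at e1 e2
          have e3 : lam ((c' : ℕ × ℕ).1) = lam r.1 := by rw [← heq, e1]
          have := hpos r.1 (hrC r)
          omega
        · rw [Fin.lt_def, Graw_other r T' c h1, Graw_other r T' c' h2]
          exact hrow ⟨c.1, emb r c.1 c.2 h1⟩ ⟨c'.1, emb r c'.1 c'.2 h2⟩ heq hlt
    · -- columns
      intro c c' heq hlt
      by_cases h2 : c'.1 = (r.1, r.1 + lam r.1 - 1)
      · have h1 : c.1 ≠ (r.1, r.1 + lam r.1 - 1) := by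
          intro hcE
          have e1 := congrArg Prod.fst hcE
          have e2 := congrArg Prod.fst h2
          simp only at e1 e2
          omega
        rw [Fin.lt_def, Graw_corner r T' c' h2, Graw_other r T' c h1]
        exact hvlt r _
      · by_cases h1 : c.1 = (r.1, r.1 + lam r.1 - 1)
        · exfalso
          have hm := mem_shiftedCells.mp c'.2
          have e1 := congrArg Prod.fst h1
          have e2 := congrArg Prod.snd h1
          simp only at e1 e2
          rcases hrC' r with hcase | hcase
          · omega
          · have hmono := row_end_mono hdec ((c' : ℕ × ℕ).1) hm.1 (r.1 + 1) (by omega)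
            omega
        · rw [Fin.lt_def, Graw_other r T' c h1, Graw_other r T' c' h2]
          exact hcol ⟨c.1, emb r c.1 c.2 h1⟩ ⟨c'.1, emb r c'.1 c'.2 h2⟩ heq hlt
  -- the packaged map
  let G : (Σ r : ↥C, φ r) → {T : ↥(shiftedCells l lam) → Fin n // IsSST l lam T} :=
    fun x => ⟨Graw x.1 x.2.1, hG x.1 x.2.1 x.2.2⟩
  have Ginj : Function.Injective G := by
    rintro ⟨r, T', hT'⟩ ⟨s, S', hS'⟩ h
    have hval := congrArg Subtype.val h
    have hr_eq : r = s := by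
      by_contra hne
      have h1 : r.1 ≠ s.1 := fun hh => hne (Subtype.ext hh)
      have hcmem := cornerCell_mem (l := l) (lam := lam) (hrC r) (hpos _ (hrC r))
      have hv1 := congrArg Fin.val (congrFun hval ⟨(r.1, r.1 + lam r.1 - 1), hcmem⟩)
      have hner : ((⟨(r.1, r.1 + lam r.1 - 1), hcmem⟩ : ↥(shiftedCells l lam)) : ℕ × ℕ)
          ≠ (s.1, s.1 + lam s.1 - 1) := fun hh => h1 (congrArg Prod.fst hh)
      rw [Graw_corner r T' _ rfl, Graw_other s S' _ hner] at hv1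
      exact absurd hv1 (ne_of_gt (hvlt s _))
    subst hr_eq
    have hTS : T' = S' := by
      funext c
      apply Fin.ext
      have hv1 := congrArg Fin.val (congrFun hval ⟨c.1, (memcell r c).1⟩)
      rw [Graw_other r T' _ (memcell r c).2, Graw_other r S' _ (memcell r c).2] at hv1
      exact hv1
    subst hTS
    rfl
  have Gsurj : Function.Surjective G := by
    rintro ⟨T, hT⟩
    obtain ⟨hbij, hrow, hcol⟩ := id hT
    let e := Equiv.ofBijective T hbij
    set c₀ := e.symm ⟨n - 1, by omega⟩ with hc₀def
    have hc₀ : (T c₀ : Fin n).1 = n - 1 := by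
      have h0 := e.apply_symm_apply (⟨n - 1, by omega⟩ : Fin n)
      exact congrArg Fin.val h0
    have huniq : ∀ c : ↥(shiftedCells l lam), (T c : Fin n).1 = n - 1 → c = c₀ := by
      intro c hcv
      apply hbij.1
      apply Fin.ext
      rw [hcv, hc₀]
    have hmem := mem_shiftedCells.mp c₀.2
    have hj : (c₀ : ℕ × ℕ).2 = (c₀ : ℕ × ℕ).1 + lam ((c₀ : ℕ × ℕ).1) - 1 := by
      by_contra hne
      have hlt2 : (c₀ : ℕ × ℕ).2 + 1 < (c₀ : ℕ × ℕ).1 + lam ((c₀ : ℕ × ℕ).1) := by omega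
      have hmem2 : ((c₀ : ℕ × ℕ).1, (c₀ : ℕ × ℕ).2 + 1) ∈ shiftedCells l lam :=
        memmk _ _ hmem.1 (by omega) hlt2
      have := hrow c₀ ⟨_, hmem2⟩ rfl
        (show (c₀ : ℕ × ℕ).2 < (c₀ : ℕ × ℕ).2 + 1 by omega)
      rw [Fin.lt_def, hc₀] at this
      have h5 := (T ⟨_, hmem2⟩).2
      omega
    have hcorner : (c₀ : ℕ × ℕ).1 + 1 = l ∨ lam ((c₀ : ℕ × ℕ).1 + 1) + 1 < lam ((c₀ : ℕ × ℕ).1) := by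
      by_contra hnc
      push_neg at hnc
      obtain ⟨hnc1, hnc2⟩ := hnc
      have hl2 : (c₀ : ℕ × ℕ).1 + 1 < l := by omega
      have hd2 : lam ((c₀ : ℕ × ℕ).1 + 1) < lam ((c₀ : ℕ × ℕ).1) :=
        hdec _ _ (by omega) hl2
      have hp2 := hpos _ hl2
      have hmem2 : ((c₀ : ℕ × ℕ).1 + 1, (c₀ : ℕ × ℕ).2) ∈ shiftedCells l lam :=
        memmk _ _ hl2 (by omega) (by omega)
      have := hcol c₀ ⟨_, hmem2⟩ rfl
        (show (c₀ : ℕ × ℕ).1 < (c₀ : ℕ × ℕ).1 + 1 by omega)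
      rw [Fin.lt_def, hc₀] at this
      have h5 := (T ⟨_, hmem2⟩).2
      omega
    have hr0C : (c₀ : ℕ × ℕ).1 ∈ C :=
      Finset.mem_filter.mpr ⟨Finset.mem_range.mpr hmem.1, hcorner⟩
    let r : ↥C := ⟨(c₀ : ℕ × ℕ).1, hr0C⟩
    have hcc : (c₀ : ℕ × ℕ) = (r.1, r.1 + lam r.1 - 1) := Prod.ext rfl hj
    have memcell2 : ∀ c : ↥(shiftedCells l (Function.update lam r.1 (lam r.1 - 1))),
        (T ⟨c.1, (memcell r c).1⟩ : Fin n).1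
          < ∑ i ∈ Finset.range l, Function.update lam r.1 (lam r.1 - 1) i := by
      intro c
      have hv := (T ⟨c.1, (memcell r c).1⟩).2
      have hne2 : (T ⟨c.1, (memcell r c).1⟩ : Fin n).1 ≠ n - 1 := by
        intro hh
        have h6 := huniq _ hh
        have h7 := congrArg Subtype.val h6
        exact (memcell r c).2 (h7.trans hcc)
      have heq := hsum r.1 (hrC r)
      omega
    let T' : ↥(shiftedCells l (Function.update lam r.1 (lam r.1 - 1)))
        → Fin (∑ i ∈ Finset.range l, Function.update lam r.1 (lam r.1 - 1) i) :=
      fun c => ⟨(T ⟨c.1, (memcell r c).1⟩).1, memcell2 c⟩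
    have hT' : IsSST l (Function.update lam r.1 (lam r.1 - 1)) T' := by
      refine ⟨⟨?_, ?_⟩, ?_, ?_⟩
      · intro c c' h
        have hv := congrArg Fin.val h
        have h3 := hbij.1 (Fin.ext hv)
        have h4 := congrArg Subtype.val h3
        exact Subtype.ext h4
      · intro k
        have hk' := hvlt r k
        obtain ⟨a, ha⟩ := hbij.2 ⟨(k : ℕ), by omega⟩
        have hane : a.1 ≠ (r.1, r.1 + lam r.1 - 1) := by
          intro hh
          have hac : a = c₀ := Subtype.ext (hh.trans hcc.symm)
          have hv : (T a : Fin n).1 = (k : ℕ) := congrArg Fin.val ha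
          have hv2 : (T c₀ : Fin n).1 = (k : ℕ) := by rw [← hac]; exact hv
          omega
        refine ⟨⟨a.1, emb r a.1 a.2 hane⟩, ?_⟩
        apply Fin.ext
        have hv : (T a : Fin n).1 = (k : ℕ) := congrArg Fin.val ha
        exact hv
      · intro c c' heq hlt
        rw [Fin.lt_def]
        exact hrow ⟨c.1, (memcell r c).1⟩ ⟨c'.1, (memcell r c').1⟩ heq hlt
      · intro c c' heq hlt
        rw [Fin.lt_def]
        exact hcol ⟨c.1, (memcell r c).1⟩ ⟨c'.1, (memcell r c').1⟩ heq hlt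
    refine ⟨⟨r, ⟨T', hT'⟩⟩, ?_⟩
    apply Subtype.ext
    funext c
    apply Fin.ext
    show (Graw r T' c : Fin n).1 = (T c : Fin n).1
    by_cases h : c.1 = (r.1, r.1 + lam r.1 - 1)
    · rw [Graw_corner r T' c h]
      rw [show c = c₀ from Subtype.ext (h.trans hcc.symm), hc₀]
    · rw [Graw_other r T' c h]
  -- conclude
  letI : ∀ r : ↥C, Fintype (φ r) := fun r => Fintype.ofFinite _
  have hcard : stdShiftedTableauCount l lam = Nat.card (Σ r : ↥C, φ r) :=
    (Nat.card_congr (Equiv.ofBijective G ⟨Ginj, Gsurj⟩)).symm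
  rw [hcard, Nat.card_eq_fintype_card, Fintype.card_sigma]
  rw [← Finset.sum_coe_sort C (fun r => stdShiftedTableauCount l (Function.update lam r (lam r - 1)))]
  refine Finset.sum_congr rfl fun r _ => ?_
  rw [stdShiftedTableauCount, Nat.card_eq_fintype_card]
end Rec

section Algebra
open Finset Polynomial

lemma divided_diff (l : ℕ) (hl : 0 < l) (y z : ℕ → ℚ)
    (hy : Set.InjOn y (Finset.range l)) :
    ∑ r ∈ Finset.range l,
        (∏ j ∈ Finset.range l, (y r - z j)) / (∏ j ∈ (Finset.range l).erase r, (y r - y j))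
      = (∑ r ∈ Finset.range l, y r) - (∑ j ∈ Finset.range l, z j) := by
  classical
  set Py : ℚ[X] := ∏ j ∈ Finset.range l, (X - C (y j)) with hPy
  set Pz : ℚ[X] := ∏ j ∈ Finset.range l, (X - C (z j)) with hPz
  have hPymonic : Py.Monic := monic_prod_of_monic _ _ (fun j _ => monic_X_sub_C _)
  have hPzmonic : Pz.Monic := monic_prod_of_monic _ _ (fun j _ => monic_X_sub_C _)
  have hPydeg : Py.natDegree = l := by
    rw [hPy, natDegree_prod_of_monic _ _ (fun j _ => monic_X_sub_C _)]
    simp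
  have hPzdeg : Pz.natDegree = l := by
    rw [hPz, natDegree_prod_of_monic _ _ (fun j _ => monic_X_sub_C _)]
    simp
  set R : ℚ[X] := Pz - Py with hR
  have hdegR : R.degree < l := by
    have h1 : Pz.degree = Py.degree := by
      rw [degree_eq_natDegree hPzmonic.ne_zero, degree_eq_natDegree hPymonic.ne_zero,
        hPydeg, hPzdeg]
    have h2 := degree_sub_lt h1 hPzmonic.ne_zero
      (by rw [hPzmonic.leadingCoeff, hPymonic.leadingCoeff])
    calc R.degree < Pz.degree := h2
    _ = l := by rw [degree_eq_natDegree hPzmonic.ne_zero, hPzdeg]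
  have hinterp : R = Lagrange.interpolate (Finset.range l) y (fun i => R.eval (y i)) := by
    apply Lagrange.eq_interpolate
    · exact hy
    · rwa [Finset.card_range]
  -- coefficients at l-1
  have hcoeffPy : Py.coeff (l - 1) = -∑ j ∈ Finset.range l, y j := by
    have h1 : Py.nextCoeff = ∑ j ∈ Finset.range l, nextCoeff (X - C (y j)) :=
      Monic.nextCoeff_prod _ _ (fun j _ => monic_X_sub_C _)
    simp only [nextCoeff_X_sub_C] at h1
    rw [show l - 1 = Py.natDegree - 1 from by rw [hPydeg],
      ← nextCoeff_of_natDegree_pos (by rw [hPydeg]; omega), h1]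
    exact Finset.sum_neg_distrib _
  have hcoeffPz : Pz.coeff (l - 1) = -∑ j ∈ Finset.range l, z j := by
    have h1 : Pz.nextCoeff = ∑ j ∈ Finset.range l, nextCoeff (X - C (z j)) :=
      Monic.nextCoeff_prod _ _ (fun j _ => monic_X_sub_C _)
    simp only [nextCoeff_X_sub_C] at h1
    rw [show l - 1 = Pz.natDegree - 1 from by rw [hPzdeg],
      ← nextCoeff_of_natDegree_pos (by rw [hPzdeg]; omega), h1]
    exact Finset.sum_neg_distrib _
  have hcoeffR : R.coeff (l - 1)
      = (∑ r ∈ Finset.range l, y r) - (∑ j ∈ Finset.range l, z j) := by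
    rw [hR, coeff_sub, hcoeffPy, hcoeffPz]
    ring
  -- coefficient of the interpolation polynomial
  have hbasis : ∀ r ∈ Finset.range l, (Lagrange.basis (Finset.range l) y r).coeff (l - 1)
      = (∏ j ∈ (Finset.range l).erase r, (y r - y j))⁻¹ := by
    intro r hr
    have hb : Lagrange.basis (Finset.range l) y r
        = C (∏ j ∈ (Finset.range l).erase r, (y r - y j)⁻¹)
          * ∏ j ∈ (Finset.range l).erase r, (X - C (y j)) := by
      simp only [Lagrange.basis, Lagrange.basisDivisor]
      rw [Finset.prod_mul_distrib, map_prod]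
    have hQmonic : (∏ j ∈ (Finset.range l).erase r, (X - C (y j))).Monic :=
      monic_prod_of_monic _ _ (fun j _ => monic_X_sub_C _)
    have hQdeg : (∏ j ∈ (Finset.range l).erase r, (X - C (y j))).natDegree = l - 1 := by
      rw [natDegree_prod_of_monic _ _ (fun j _ => monic_X_sub_C _)]
      simp [Finset.card_erase_of_mem hr]
    rw [hb, coeff_C_mul]
    rw [← hQdeg, hQmonic.coeff_natDegree, mul_one, Finset.prod_inv_distrib]
  have hevalR : ∀ r ∈ Finset.range l, R.eval (y r) = ∏ j ∈ Finset.range l, (y r - z j) := by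
    intro r hr
    rw [hR, eval_sub]
    have h0 : Py.eval (y r) = 0 := by
      rw [hPy, eval_prod]
      apply Finset.prod_eq_zero hr
      simp
    have h1 : Pz.eval (y r) = ∏ j ∈ Finset.range l, (y r - z j) := by
      rw [hPz, eval_prod]
      simp
    rw [h0, h1, sub_zero]
  have hmain := congrArg (fun p : ℚ[X] => p.coeff (l - 1)) hinterp
  rw [hcoeffR, Lagrange.interpolate_apply, finset_sum_coeff] at hmain
  rw [hmain]
  refine Finset.sum_congr rfl fun r hr => ?_
  rw [coeff_C_mul, hbasis r hr, hevalR r hr, div_eq_mul_inv]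

lemma identB (l : ℕ) (x : ℕ → ℚ)
    (hx1 : ∀ i < l, 1 ≤ x i)
    (hxd : ∀ i j, i < l → j < l → i ≠ j → x i ≠ x j) :
    ∑ r ∈ Finset.range l, x r * ∏ j ∈ (Finset.range l).erase r,
        ((x r - x j - 1) * (x r + x j)) / ((x r - x j) * (x r + x j - 1))
      = ∑ r ∈ Finset.range l, x r := by
  classical
  rcases Nat.eq_zero_or_pos l with rfl | hl
  · simp
  set y : ℕ → ℚ := fun i => x i ^ 2 - x i with hy
  set z : ℕ → ℚ := fun i => x i ^ 2 + x i with hz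
  have hyinj : Set.InjOn y (Finset.range l) := by
    intro i hi j hj hij
    simp only [Finset.coe_range, Set.mem_Iio] at hi hj
    by_contra hne
    have h1 : x i ≠ x j := hxd i j hi hj hne
    have h2 : (x i - x j) * (x i + x j - 1) = 0 := by
      have : y i - y j = 0 := by rw [hij]; ring
      calc (x i - x j) * (x i + x j - 1) = y i - y j := by rw [hy]; ring
      _ = 0 := this
    rcases mul_eq_zero.mp h2 with h3 | h3
    · exact h1 (by linarith [sub_eq_zero.mp h3])
    · have := hx1 i hi
      have := hx1 j hj
      linarith
  have hterm : ∀ r ∈ Finset.range l,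
      x r * ∏ j ∈ (Finset.range l).erase r,
          ((x r - x j - 1) * (x r + x j)) / ((x r - x j) * (x r + x j - 1))
        = (-(1/2 : ℚ)) * ((∏ j ∈ Finset.range l, (y r - z j))
            / (∏ j ∈ (Finset.range l).erase r, (y r - y j))) := by
    intro r hr
    have hnum : ∀ j, (x r - x j - 1) * (x r + x j) = y r - z j := by
      intro j; rw [hy, hz]; ring
    have hden : ∀ j, (x r - x j) * (x r + x j - 1) = y r - y j := by
      intro j; rw [hy]; ring
    have h1 : ∏ j ∈ (Finset.range l).erase r,
        ((x r - x j - 1) * (x r + x j)) / ((x r - x j) * (x r + x j - 1))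
        = (∏ j ∈ (Finset.range l).erase r, (y r - z j))
          / (∏ j ∈ (Finset.range l).erase r, (y r - y j)) := by
      rw [← Finset.prod_div_distrib]
      exact Finset.prod_congr rfl fun j _ => by rw [hnum, hden]
    have h2 : ∏ j ∈ Finset.range l, (y r - z j)
        = (y r - z r) * ∏ j ∈ (Finset.range l).erase r, (y r - z j) :=
      (Finset.mul_prod_erase _ _ hr).symm
    have h3 : y r - z r = -2 * x r := by rw [hy, hz]; ring
    rw [h1, h2, h3]
    field_simp
  rw [Finset.sum_congr rfl hterm, ← Finset.mul_sum,
    divided_diff l hl y z hyinj]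
  have h4 : (∑ r ∈ Finset.range l, y r) - (∑ j ∈ Finset.range l, z j)
      = -2 * ∑ r ∈ Finset.range l, x r := by
    rw [← Finset.sum_sub_distrib, Finset.mul_sum]
    refine Finset.sum_congr rfl fun r _ => ?_
    rw [hy, hz]; ring
  rw [h4]
  ring
end Algebra

section Fexpr
open Finset

noncomputable def Fexpr (l : ℕ) (lam : ℕ → ℕ) : ℚ :=
  ((∑ i ∈ Finset.range l, lam i).factorial : ℚ)
    * (∏ i ∈ Finset.range l, ((lam i).factorial : ℚ)⁻¹)
    * (∏ i ∈ Finset.range l, ∏ j ∈ Finset.range l,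
        if i < j then ((lam i : ℚ) - (lam j : ℚ)) / ((lam i : ℚ) + (lam j : ℚ)) else 1)

variable {l : ℕ} {lam : ℕ → ℕ}

lemma Fexpr_congr {mu : ℕ → ℕ} (h : ∀ i < l, lam i = mu i) : Fexpr l lam = Fexpr l mu := by
  unfold Fexpr
  have e1 : ∀ i ∈ Finset.range l, lam i = mu i := fun i hi => h i (Finset.mem_range.mp hi)
  rw [Finset.sum_congr rfl e1]
  congr 1
  · congr 1
    exact Finset.prod_congr rfl fun i hi => by rw [e1 i hi]
  · refine Finset.prod_congr rfl fun i hi => Finset.prod_congr rfl fun j hj => ?_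
    rw [e1 i hi, e1 j hj]

lemma Fexpr_zero_last (hl : 0 < l) (hpos : ∀ i < l - 1, 0 < lam i) (h0 : lam (l - 1) = 0) :
    Fexpr l lam = Fexpr (l - 1) lam := by
  obtain ⟨m, rfl⟩ : ∃ m, l = m + 1 := ⟨l - 1, by omega⟩
  simp only [Nat.add_sub_cancel] at h0 hpos ⊢
  unfold Fexpr
  rw [Finset.sum_range_succ, h0, Nat.add_zero]
  congr 1
  · rw [Finset.prod_range_succ, h0]
    simp
  · rw [Finset.prod_range_succ]
    have hlast : ∏ j ∈ Finset.range (m + 1),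
        (if m < j then ((lam m : ℚ) - (lam j : ℚ)) / ((lam m : ℚ) + (lam j : ℚ)) else 1) = 1 := by
      apply Finset.prod_eq_one
      intro j hj
      rw [if_neg (by simp at hj; omega)]
    rw [hlast, mul_one]
    refine Finset.prod_congr rfl fun i hi => ?_
    rw [Finset.prod_range_succ]
    have hi' : i < m := Finset.mem_range.mp hi
    have : (if i < m then ((lam i : ℚ) - (lam m : ℚ)) / ((lam i : ℚ) + (lam m : ℚ)) else 1)
        = 1 := by
      rw [if_pos hi', h0]
      have : (0 : ℚ) < (lam i : ℚ) := by exact_mod_cast hpos i hi'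
      push_cast
      rw [sub_zero, add_zero, div_self (by linarith)]
    rw [this, mul_one]

noncomputable def ratioQ (lam : ℕ → ℕ) (r k : ℕ) : ℚ :=
  (((lam r : ℚ) - (lam k : ℚ) - 1) * ((lam r : ℚ) + (lam k : ℚ)))
    / (((lam r : ℚ) - (lam k : ℚ)) * ((lam r : ℚ) + (lam k : ℚ) - 1))

noncomputable def qQ (lam : ℕ → ℕ) (r i j : ℕ) : ℚ :=
  if i = r ∧ i < j then ratioQ lam r j else if j = r ∧ i < j then ratioQ lam r i else 1

lemma upd_cast {l : ℕ} {lam : ℕ → ℕ} {r : ℕ} (hr : r < l) (hpos : ∀ i < l, 0 < lam i) :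
    ∀ i, ((Function.update lam r (lam r - 1) i : ℕ) : ℚ)
      = if i = r then (lam r : ℚ) - 1 else (lam i : ℚ) := by
  intro i
  rcases eq_or_ne i r with h | h
  · subst h
    rw [Function.update_self, if_pos rfl]
    have h1 := hpos i hr
    push_cast [Nat.cast_sub (show 1 ≤ lam i by omega)]
    ring
  · rw [Function.update_of_ne h, if_neg h]

lemma Gprod_update {l : ℕ} {lam : ℕ → ℕ} {r : ℕ} (hr : r < l)
    (hpos : ∀ i < l, 0 < lam i)
    (hdec : ∀ i j, i < j → j < l → lam j < lam i) :
    (∏ i ∈ Finset.range l, ∏ j ∈ Finset.range l,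
        if i < j then ((Function.update lam r (lam r - 1) i : ℚ)
            - (Function.update lam r (lam r - 1) j : ℚ))
          / ((Function.update lam r (lam r - 1) i : ℚ)
            + (Function.update lam r (lam r - 1) j : ℚ)) else 1)
      = (∏ i ∈ Finset.range l, ∏ j ∈ Finset.range l,
          if i < j then ((lam i : ℚ) - (lam j : ℚ)) / ((lam i : ℚ) + (lam j : ℚ)) else 1)
        * ∏ j ∈ (Finset.range l).erase r, ratioQ lam r j := by
  classical
  have hxpos : ∀ i < l, (1 : ℚ) ≤ (lam i : ℚ) := by
    intro i hi
    have := hpos i hi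
    exact_mod_cast this
  have hxdec : ∀ i j, i < j → j < l → (lam j : ℚ) < (lam i : ℚ) := by
    intro i j h1 h2
    have := hdec i j h1 h2
    exact_mod_cast this
  have hfact : ∀ i ∈ Finset.range l, ∀ j ∈ Finset.range l,
      (if i < j then ((Function.update lam r (lam r - 1) i : ℚ)
          - (Function.update lam r (lam r - 1) j : ℚ))
        / ((Function.update lam r (lam r - 1) i : ℚ)
          + (Function.update lam r (lam r - 1) j : ℚ)) else 1)
      = (if i < j then ((lam i : ℚ) - (lam j : ℚ)) / ((lam i : ℚ) + (lam j : ℚ)) else 1)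
          * qQ lam r i j := by
    intro i hi j hj
    rw [Finset.mem_range] at hi hj
    rw [upd_cast hr hpos i, upd_cast hr hpos j, qQ]
    rcases eq_or_ne i r with rfl | hir
    · rcases eq_or_ne j i with rfl | hji
      · simp
      · by_cases hij : i < j
        · rw [if_pos rfl, if_neg hji, if_pos hij, if_pos hij,
            if_pos (show i = i ∧ i < j from ⟨rfl, hij⟩), ratioQ]
          have h1 := hxdec i j hij hj
          have h2 := hxpos j hj
          have h3 := hxpos i hi
          have hne1 : (lam i : ℚ) - (lam j : ℚ) ≠ 0 := by linarith
          have hne2 : (lam i : ℚ) + (lam j : ℚ) ≠ 0 := by linarith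
          have hne3 : (lam i : ℚ) + (lam j : ℚ) - 1 ≠ 0 := by linarith
          have hne4 : (lam i : ℚ) - 1 + (lam j : ℚ) ≠ 0 := by linarith
          field_simp
          ring
        · rw [if_neg hij, if_neg hij,
            if_neg (show ¬(i = i ∧ i < j) from fun h => hij h.2),
            if_neg (show ¬(j = i ∧ i < j) from fun h => hij h.2), mul_one]
    · rw [if_neg hir]
      rcases eq_or_ne j r with rfl | hjr
      · by_cases hij : i < j
        · rw [if_pos rfl, if_pos hij, if_pos hij,
            if_neg (show ¬(i = j ∧ i < j) from fun h => hir h.1),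
            if_pos (show j = j ∧ i < j from ⟨rfl, hij⟩), ratioQ]
          have h1 := hxdec i j hij hj
          have h2 := hxpos j hj
          have h3 := hxpos i hi
          have hne1 : (lam i : ℚ) - (lam j : ℚ) ≠ 0 := by linarith
          have hne2 : (lam i : ℚ) + (lam j : ℚ) ≠ 0 := by linarith
          have hne3 : (lam j : ℚ) - (lam i : ℚ) ≠ 0 := by linarith
          have hne4 : (lam j : ℚ) + (lam i : ℚ) - 1 ≠ 0 := by linarith
          have hne5 : (lam i : ℚ) + ((lam j : ℚ) - 1) ≠ 0 := by linarith
          field_simp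
          ring
        · rw [if_neg hij, if_neg hij,
            if_neg (show ¬(i = j ∧ i < j) from fun h => hij h.2),
            if_neg (show ¬(j = j ∧ i < j) from fun h => hij h.2), mul_one]
      · rw [if_neg hjr,
          if_neg (show ¬(i = r ∧ i < j) from fun h => hir h.1),
          if_neg (show ¬(j = r ∧ i < j) from fun h => hjr h.1), mul_one]
  have hsplit : (∏ i ∈ Finset.range l, ∏ j ∈ Finset.range l,
      (if i < j then ((Function.update lam r (lam r - 1) i : ℚ)
          - (Function.update lam r (lam r - 1) j : ℚ))
        / ((Function.update lam r (lam r - 1) i : ℚ)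
          + (Function.update lam r (lam r - 1) j : ℚ)) else 1))
      = (∏ i ∈ Finset.range l, ∏ j ∈ Finset.range l,
          (if i < j then ((lam i : ℚ) - (lam j : ℚ)) / ((lam i : ℚ) + (lam j : ℚ)) else 1))
        * ∏ i ∈ Finset.range l, ∏ j ∈ Finset.range l, qQ lam r i j := by
    rw [← Finset.prod_mul_distrib]
    refine Finset.prod_congr rfl fun i hi => ?_
    rw [← Finset.prod_mul_distrib]
    exact Finset.prod_congr rfl fun j hj => hfact i hi j hj
  rw [hsplit]
  congr 1
  have hrowr : ∏ j ∈ Finset.range l, qQ lam r r j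
      = ∏ j ∈ (Finset.range l).filter (fun j => r < j), ratioQ lam r j := by
    rw [Finset.prod_filter]
    refine Finset.prod_congr rfl fun j hj => ?_
    rw [qQ]
    by_cases h : r < j
    · rw [if_pos (show r = r ∧ r < j from ⟨rfl, h⟩), if_pos h]
    · rw [if_neg (show ¬(r = r ∧ r < j) from fun hh => h hh.2),
        if_neg (show ¬(j = r ∧ r < j) from fun hh => h hh.2), if_neg h]
  have hrowi : ∀ i ∈ (Finset.range l).erase r, ∏ j ∈ Finset.range l, qQ lam r i j
      = if i < r then ratioQ lam r i else 1 := by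
    intro i hi
    have hir : i ≠ r := (Finset.mem_erase.mp hi).1
    have h1 : ∀ j, qQ lam r i j
        = if j = r then (if i < r then ratioQ lam r i else 1) else 1 := by
      intro j
      rw [qQ]
      rcases eq_or_ne j r with rfl | hjr
      · by_cases h2 : i < j
        · rw [if_neg (show ¬(i = j ∧ i < j) from fun hh => hir hh.1),
            if_pos (show j = j ∧ i < j from ⟨rfl, h2⟩), if_pos rfl, if_pos h2]
        · rw [if_neg (show ¬(i = j ∧ i < j) from fun hh => h2 hh.2),
            if_neg (show ¬(j = j ∧ i < j) from fun hh => h2 hh.2), if_pos rfl,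
            if_neg h2]
      · rw [if_neg (show ¬(i = r ∧ i < j) from fun hh => hir hh.1),
          if_neg (show ¬(j = r ∧ i < j) from fun hh => hjr hh.1), if_neg hjr]
    calc ∏ j ∈ Finset.range l, qQ lam r i j
        = ∏ j ∈ Finset.range l, (if j = r then (if i < r then ratioQ lam r i else 1) else 1) :=
          Finset.prod_congr rfl fun j _ => h1 j
    _ = if r ∈ Finset.range l then (if i < r then ratioQ lam r i else 1) else 1 :=
          Finset.prod_ite_eq' _ _ _
    _ = if i < r then ratioQ lam r i else 1 := by rw [if_pos (Finset.mem_range.mpr hr)]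
  rw [← Finset.mul_prod_erase _ _ (Finset.mem_range.mpr hr), hrowr,
    Finset.prod_congr rfl hrowi]
  have h5 : ∏ i ∈ (Finset.range l).erase r, (if i < r then ratioQ lam r i else 1)
      = ∏ i ∈ ((Finset.range l).erase r).filter (fun i => i < r), ratioQ lam r i := by
    rw [Finset.prod_filter]
  have h6 : ((Finset.range l).erase r).filter (fun i => ¬ i < r)
      = (Finset.range l).filter (fun j => r < j) := by
    ext j
    simp only [Finset.mem_filter, Finset.mem_erase, Finset.mem_range]
    omega
  rw [h5, ← h6, mul_comm]
  exact Finset.prod_filter_mul_prod_filter_not _ _ _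
end Fexpr

section Main
open Finset

variable {l : ℕ} {lam : ℕ → ℕ}

lemma Fexpr_update {r : ℕ} (hr : r < l)
    (hpos : ∀ i < l, 0 < lam i)
    (hdec : ∀ i j, i < j → j < l → lam j < lam i) :
    Fexpr l (Function.update lam r (lam r - 1))
      = Fexpr l lam * ((lam r : ℚ) / ((∑ i ∈ Finset.range l, lam i : ℕ) : ℚ))
        * ∏ j ∈ (Finset.range l).erase r, ratioQ lam r j := by
  have h1 : 1 ≤ lam r := hpos r hr
  have hsum := sum_range_update hr h1
  have hn1 : 1 ≤ ∑ i ∈ Finset.range l, lam i := by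
    have h0 : lam r ≤ ∑ i ∈ Finset.range l, lam i :=
      Finset.single_le_sum (f := lam) (fun i _ => Nat.zero_le _) (Finset.mem_range.mpr hr)
    omega
  have hNne : ((∑ i ∈ Finset.range l, lam i : ℕ) : ℚ) ≠ 0 :=
    Nat.cast_ne_zero.mpr (by omega)
  unfold Fexpr
  rw [hsum, Gprod_update hr hpos hdec]
  have hprodfact : ∏ i ∈ Finset.range l,
      ((Function.update lam r (lam r - 1) i).factorial : ℚ)⁻¹
      = (lam r : ℚ) * ∏ i ∈ Finset.range l, ((lam i).factorial : ℚ)⁻¹ := by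
    rw [← Finset.mul_prod_erase (Finset.range l)
        (fun i => ((Function.update lam r (lam r - 1) i).factorial : ℚ)⁻¹)
        (Finset.mem_range.mpr hr),
      ← Finset.mul_prod_erase (Finset.range l) (fun i => ((lam i).factorial : ℚ)⁻¹)
        (Finset.mem_range.mpr hr)]
    have herase : ∏ i ∈ (Finset.range l).erase r,
        ((Function.update lam r (lam r - 1) i).factorial : ℚ)⁻¹
        = ∏ i ∈ (Finset.range l).erase r, ((lam i).factorial : ℚ)⁻¹ :=
      Finset.prod_congr rfl
        (fun i hi => by rw [Function.update_of_ne (Finset.mem_erase.mp hi).1])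
    rw [herase, Function.update_self]
    have hfr : ((lam r).factorial : ℚ) = (lam r : ℚ) * ((lam r - 1).factorial : ℚ) := by
      rw [← Nat.mul_factorial_pred (by omega)]
      push_cast
      ring
    have hxne : (lam r : ℚ) ≠ 0 := Nat.cast_ne_zero.mpr (by omega)
    have hinv : ((lam r - 1).factorial : ℚ)⁻¹ = (lam r : ℚ) * ((lam r).factorial : ℚ)⁻¹ := by
      rw [hfr, mul_inv, ← mul_assoc, mul_inv_cancel₀ hxne, one_mul]
    rw [hinv]
    ring
  rw [hprodfact]
  have hkey : ((∑ i ∈ Finset.range l, lam i).factorial : ℚ)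
      = (((∑ i ∈ Finset.range l, lam i) - 1).factorial : ℚ)
        * ((∑ i ∈ Finset.range l, lam i : ℕ) : ℚ) := by
    rw [← Nat.mul_factorial_pred (by omega)]
    push_cast
    ring
  rw [hkey]
  have habc : ∀ (A B C R xr NQ : ℚ), NQ ≠ 0 →
      A * (xr * B) * (C * R) = A * NQ * B * C * (xr / NQ) * R := by
    intro A B C R xr NQ h
    field_simp
  exact habc _ _ _ _ _ _ hNne

lemma Fexpr_rec (hl : 0 < l)
    (hpos : ∀ i < l, 0 < lam i)
    (hdec : ∀ i j, i < j → j < l → lam j < lam i) :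
    ∑ r ∈ Finset.range l, Fexpr l (Function.update lam r (lam r - 1)) = Fexpr l lam := by
  have hn1 : 1 ≤ ∑ i ∈ Finset.range l, lam i := by
    have h0 : lam 0 ≤ ∑ i ∈ Finset.range l, lam i :=
      Finset.single_le_sum (f := lam) (fun i _ => Nat.zero_le _) (Finset.mem_range.mpr hl)
    have := hpos 0 hl
    omega
  have hNne : ((∑ i ∈ Finset.range l, lam i : ℕ) : ℚ) ≠ 0 :=
    Nat.cast_ne_zero.mpr (by omega)
  have hx1 : ∀ i < l, (1 : ℚ) ≤ (lam i : ℚ) := by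
    intro i hi
    have := hpos i hi
    exact_mod_cast this
  have hxd : ∀ i j, i < l → j < l → i ≠ j → (lam i : ℚ) ≠ (lam j : ℚ) := by
    intro i j hi hj hij
    rcases Nat.lt_or_ge i j with h | h
    · have := hdec i j h hj
      intro hc
      have : lam i = lam j := by exact_mod_cast hc
      omega
    · have h2 : j < i := by omega
      have := hdec j i h2 hi
      intro hc
      have : lam i = lam j := by exact_mod_cast hc
      omega
  have hid : ∑ r ∈ Finset.range l, (lam r : ℚ) * ∏ j ∈ (Finset.range l).erase r, ratioQ lam r j
      = ∑ r ∈ Finset.range l, (lam r : ℚ) := by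
    have h := identB l (fun i => (lam i : ℚ)) hx1 hxd
    simpa [ratioQ] using h
  rw [Finset.sum_congr rfl (fun r hr => Fexpr_update (Finset.mem_range.mp hr) hpos hdec)]
  have hfold : ∀ r ∈ Finset.range l,
      Fexpr l lam * ((lam r : ℚ) / ((∑ i ∈ Finset.range l, lam i : ℕ) : ℚ))
          * ∏ j ∈ (Finset.range l).erase r, ratioQ lam r j
        = (Fexpr l lam / ((∑ i ∈ Finset.range l, lam i : ℕ) : ℚ))
          * ((lam r : ℚ) * ∏ j ∈ (Finset.range l).erase r, ratioQ lam r j) := by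
    intro r _
    ring
  rw [Finset.sum_congr rfl hfold, ← Finset.mul_sum, hid]
  have hcast : ∑ r ∈ Finset.range l, (lam r : ℚ)
      = ((∑ i ∈ Finset.range l, lam i : ℕ) : ℚ) := by
    push_cast
    rfl
  rw [hcast]
  exact div_mul_cancel₀ _ hNne

lemma Fexpr_noncorner {r : ℕ} (hr : r < l) (h2 : r + 1 < l) (h3 : lam (r + 1) + 1 = lam r)
    (hpos : ∀ i < l, 0 < lam i)
    (hdec : ∀ i j, i < j → j < l → lam j < lam i) :
    Fexpr l (Function.update lam r (lam r - 1)) = 0 := by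
  rw [Fexpr_update hr hpos hdec]
  have hmem : r + 1 ∈ (Finset.range l).erase r :=
    Finset.mem_erase.mpr ⟨by omega, Finset.mem_range.mpr h2⟩
  have hzero : ratioQ lam r (r + 1) = 0 := by
    rw [ratioQ, show ((lam r : ℚ) - (lam (r + 1) : ℚ) - 1) = 0 from by
      rw [← h3]; push_cast; ring]
    rw [zero_mul, zero_div]
  rw [Finset.prod_eq_zero hmem hzero, mul_zero]

lemma main_aux : ∀ n l (lam : ℕ → ℕ), (∀ i < l, 0 < lam i)
    → (∀ i j, i < j → j < l → lam j < lam i)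
    → (∑ i ∈ Finset.range l, lam i) = n
    → (stdShiftedTableauCount l lam : ℚ) = Fexpr l lam := by
  intro n
  induction n using Nat.strong_induction_on with
  | _ n ih =>
  intro l lam hpos hdec hn
  rcases Nat.eq_zero_or_pos l with rfl | hl
  · rw [count_zero_rows]
    unfold Fexpr
    simp
  · have hn1 : 1 ≤ n := by
      have h0 : lam 0 ≤ ∑ i ∈ Finset.range l, lam i :=
        Finset.single_le_sum (f := lam) (fun i _ => Nat.zero_le _) (Finset.mem_range.mpr hl)
      have := hpos 0 hl
      omega
    rw [count_rec hl hpos hdec]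
    push_cast
    have hterm : ∀ r ∈ (Finset.range l).filter (fun r => r + 1 = l ∨ lam (r + 1) + 1 < lam r),
        ((stdShiftedTableauCount l (Function.update lam r (lam r - 1)) : ℕ) : ℚ)
          = Fexpr l (Function.update lam r (lam r - 1)) := by
      intro r hrmem
      rw [Finset.mem_filter, Finset.mem_range] at hrmem
      obtain ⟨hr, hcorner⟩ := hrmem
      have hlamr : 1 ≤ lam r := hpos r hr
      have hsum' := sum_range_update hr hlamr
      by_cases hcase : lam r = 1 ∧ r + 1 = l
      · -- removed the unique box of the last row
        obtain ⟨hc1, hc2⟩ := hcase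
        have hrl : r = l - 1 := by omega
        have h0 : Function.update lam r (lam r - 1) (l - 1) = 0 := by
          rw [← hrl, Function.update_self, hc1]
        have hposup : ∀ i < l - 1, 0 < Function.update lam r (lam r - 1) i := by
          intro i hi
          rw [Function.update_of_ne (by omega)]
          exact hpos i (by omega)
        have hdecup : ∀ i j, i < j → j < l - 1 → Function.update lam r (lam r - 1) j
            < Function.update lam r (lam r - 1) i := by
          intro i j hij hj
          rw [Function.update_of_ne (by omega), Function.update_of_ne (by omega)]
          exact hdec i j hij (by omega)
        have hsums : ∑ i ∈ Finset.range l, Function.update lam r (lam r - 1) i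
            = ∑ i ∈ Finset.range (l - 1), Function.update lam r (lam r - 1) i := by
          have : l = (l - 1) + 1 := by omega
          rw [this, Finset.sum_range_succ]
          rw [show (l - 1) + 1 = l from by omega, h0, Nat.add_zero]
        have hcells : shiftedCells l (Function.update lam r (lam r - 1))
            = shiftedCells (l - 1) (Function.update lam r (lam r - 1)) :=
          shiftedCells_zero_last hl h0
        rw [count_transfer hcells hsums]
        have hih := ih (n - 1) (by omega) (l - 1) (Function.update lam r (lam r - 1))
          hposup hdecup (by omega)
        rw [hih]
        rw [← Fexpr_zero_last hl hposup h0]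
      · have hlam2 : 2 ≤ lam r := by
          have h1 := hpos r hr
          rcases hcorner with hcor | hcor
          · by_contra h
            exact hcase ⟨by omega, hcor⟩
          · omega
        have hposup : ∀ i < l, 0 < Function.update lam r (lam r - 1) i := by
          intro i hi
          rcases eq_or_ne i r with rfl | h
          · rw [Function.update_self]; omega
          · rw [Function.update_of_ne h]; exact hpos i hi
        have hdecup : ∀ i j, i < j → j < l → Function.update lam r (lam r - 1) j
            < Function.update lam r (lam r - 1) i := by
          intro i j hij hj
          rcases eq_or_ne i r with rfl | hir
          · rw [Function.update_self, Function.update_of_ne (by omega)]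
            have hrl : i + 1 < l := by omega
            have hcor2 : lam (i + 1) + 1 < lam i := by
              rcases hcorner with hcor | hcor
              · omega
              · exact hcor
            rcases eq_or_ne j (i + 1) with rfl | hj2
            · omega
            · have := hdec (i + 1) j (by omega) hj
              omega
          · rcases eq_or_ne j r with rfl | hjr
            · rw [Function.update_self, Function.update_of_ne hir]
              have := hdec i j hij hj
              omega
            · rw [Function.update_of_ne hir, Function.update_of_ne hjr]
              exact hdec i j hij hj
        exact ih (n - 1) (by omega) l (Function.update lam r (lam r - 1))
          hposup hdecup (by omega)
    rw [Finset.sum_congr rfl hterm]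
    rw [Finset.sum_subset (Finset.filter_subset _ _) ?vanish]
    case vanish =>
      intro r hrr hrn
      rw [Finset.mem_range] at hrr
      rw [Finset.mem_filter, Finset.mem_range] at hrn
      push_neg at hrn
      have h2 : r + 1 < l := by
        rcases Nat.lt_or_ge (r + 1) l with h | h
        · exact h
        · exfalso; exact (hrn hrr).1 (by omega)
      have h3 : lam (r + 1) + 1 = lam r := by
        have := hdec r (r + 1) (by omega) h2
        have := (hrn hrr).2
        omega
      exact Fexpr_noncorner hrr h2 h3 hpos hdec
    exact Fexpr_rec hl hpos hdec
end Main

/-- For a strict partition `λ₁ > λ₂ > ... > λ_ℓ > 0`, the number of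
standard shifted tableaux of shape `λ` equals
`|λ|! · ∏ i 1/λᵢ! · ∏_{i<j} (λᵢ - λⱼ)/(λᵢ + λⱼ)`. -/
theorem stdShiftedTableau_hook_formula (l : ℕ) (lam : ℕ → ℕ)
    (hpos : ∀ i < l, 0 < lam i)
    (hdec : ∀ i j, i < j → j < l → lam j < lam i) :
    (stdShiftedTableauCount l lam : ℚ)
      = ((∑ i ∈ Finset.range l, lam i).factorial : ℚ)
        * (∏ i ∈ Finset.range l, ((lam i).factorial : ℚ)⁻¹)
        * (∏ i ∈ Finset.range l, ∏ j ∈ Finset.range l,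
            if i < j then ((lam i : ℚ) - (lam j : ℚ)) / ((lam i : ℚ) + (lam j : ℚ)) else 1) := by
  rw [main_aux (∑ i ∈ Finset.range l, lam i) l lam hpos hdec rfl]
  rfl
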